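/- Let t ∈ ℕ₀, let a, δ, γ, θ be F_t-measurable random variables with a ∈ [0,1], δ ≥ 0, 0 ≤ γ ≤ min(1, δ), and θ ∈ (0,1], and let X be a [0,1]-valued random variable satisfying E_t[X] − a ≥ δ·a·(1 − a) almost surely. Then E_t[ exp( −(γ/θ)·(a + θ·(X − a)) ) ] ≤ exp( −(γ/θ)·a ) almost surely. -/

import Mathlib

open MeasureTheory Filter Set

private lemma chord_exp {x c : ℝ} (hx0 : 0 ≤ x) (hx1 : x ≤ 1) :
    Real.exp (-(c * x)) ≤ 1 - x + x * Real.exp (-c) := by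
  have h := convexOn_exp.2 (Set.mem_univ (0 : ℝ)) (Set.mem_univ (-c))
    (by linarith : (0:ℝ) ≤ 1 - x) hx0 (by ring)
  simp only [smul_eq_mul, mul_zero, Real.exp_zero, mul_one] at h
  rw [show -(c * x) = 0 + x * -c from by ring]
  linarith

private lemma key_ineq {a g : ℝ} (ha0 : 0 ≤ a) (ha1 : a ≤ 1) (hg : 0 ≤ g) :
    1 - (1 - Real.exp (-g)) * (a + g * (a * (1 - a))) ≤ Real.exp (-(g * a)) := by
  set F : ℝ → ℝ := fun s =>
    (1 - Real.exp (-s)) * (a + s * (a * (1 - a))) - (1 - Real.exp (-(s * a))) with hF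
  have hder : ∀ s : ℝ, HasDerivAt F
      (Real.exp (-s) * (a + s * (a * (1 - a))) + (1 - Real.exp (-s)) * (a * (1 - a))
        - a * Real.exp (-(s * a))) s := by
    intro s
    have h1 : HasDerivAt (fun s : ℝ => Real.exp (-s)) (-Real.exp (-s)) s := by
      simpa using ((hasDerivAt_id s).neg).exp
    have h2 : HasDerivAt (fun s : ℝ => 1 - Real.exp (-s)) (Real.exp (-s)) s := by
      simpa using h1.const_sub (1:ℝ)
    have h3 : HasDerivAt (fun s : ℝ => a + s * (a * (1 - a))) (a * (1 - a)) s := by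
      simpa using ((hasDerivAt_id s).mul_const (a * (1 - a))).const_add a
    have h4 : HasDerivAt (fun s : ℝ => Real.exp (-(s * a)))
        (Real.exp (-(s * a)) * (-a)) s := by
      simpa using (((hasDerivAt_id s).mul_const a).neg).exp
    have h5 : HasDerivAt (fun s : ℝ => 1 - Real.exp (-(s * a)))
        (a * Real.exp (-(s * a))) s := by
      have := h4.const_sub (1:ℝ)
      exact this.congr_deriv (by ring)
    exact (h2.mul h3).sub h5
  have hmono : MonotoneOn F (Set.Ici (0 : ℝ)) := by
    apply monotoneOn_of_deriv_nonneg (convex_Ici 0)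
    · exact fun s _ => (hder s).differentiableAt.continuousAt.continuousWithinAt
    · exact fun s _ => (hder s).differentiableAt.differentiableWithinAt
    · intro s hs
      rw [interior_Ici] at hs
      have hs0 : (0:ℝ) ≤ s := le_of_lt hs
      rw [(hder s).deriv]
      have hch : Real.exp (-(s * a)) ≤ 1 - a + a * Real.exp (-s) := chord_exp ha0 ha1
      have he0 : (0:ℝ) ≤ Real.exp (-s) := (Real.exp_pos _).le
      nlinarith [mul_nonneg (mul_nonneg he0 hs0) (mul_nonneg ha0 (by linarith : (0:ℝ) ≤ 1 - a)),
        mul_le_mul_of_nonneg_left hch ha0]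
  have h0 : F 0 ≤ F g := hmono Set.self_mem_Ici (Set.mem_Ici.2 hg) hg
  have hF0 : F 0 = 0 := by simp [hF]
  rw [hF0] at h0
  simp only [hF] at h0
  linarith

theorem stmt1 {Ω : Type*} {m : MeasurableSpace Ω} {μ : Measure Ω} [IsProbabilityMeasure μ]
    (𝓕 : Filtration ℕ m) (t : ℕ) (a δ γ θ X : Ω → ℝ)
    (ha_meas : StronglyMeasurable[𝓕 t] a)
    (hδ_meas : StronglyMeasurable[𝓕 t] δ)
    (hγ_meas : StronglyMeasurable[𝓕 t] γ)
    (hθ_meas : StronglyMeasurable[𝓕 t] θ)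
    (ha_mem : ∀ᵐ ω ∂μ, a ω ∈ Set.Icc (0 : ℝ) 1)
    (hδ_nonneg : ∀ᵐ ω ∂μ, 0 ≤ δ ω)
    (hγ_mem : ∀ᵐ ω ∂μ, γ ω ∈ Set.Icc 0 (min 1 (δ ω)))
    (hθ_mem : ∀ᵐ ω ∂μ, θ ω ∈ Set.Ioc (0 : ℝ) 1)
    (hX_meas : Measurable X)
    (hX_mem : ∀ᵐ ω ∂μ, X ω ∈ Set.Icc (0 : ℝ) 1)
    (hX_int : Integrable X μ)
    (hhaz : ∀ᵐ ω ∂μ, δ ω * (a ω * (1 - a ω)) ≤ (μ[X|𝓕 t]) ω - a ω) :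
    ∀ᵐ ω ∂μ,
      (μ[fun ω' => Real.exp (-(γ ω' / θ ω') * (a ω' + θ ω' * (X ω' - a ω')))|𝓕 t]) ω
        ≤ Real.exp (-(γ ω / θ ω) * a ω) := by
  have hle : 𝓕 t ≤ m := 𝓕.le t
  have haM : Measurable[𝓕 t] a := ha_meas.measurable
  have hγM : Measurable[𝓕 t] γ := hγ_meas.measurable
  have hθM : Measurable[𝓕 t] θ := hθ_meas.measurable
  set c : Ω → ℝ := fun ω => Real.exp (-(γ ω / θ ω) * a ω + γ ω * a ω) with hc
  set u : Ω → ℝ := fun ω => Real.exp (-γ ω) with hu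
  set d : Ω → ℝ := fun ω => c ω * (1 - u ω) with hd
  have hcM : Measurable[𝓕 t] c := (((hγM.div hθM).neg.mul haM).add (hγM.mul haM)).exp
  have huM : Measurable[𝓕 t] u := hγM.neg.exp
  have hdM : Measurable[𝓕 t] d := hcM.mul (measurable_const.sub huM)
  set Z : Ω → ℝ := fun ω' => Real.exp (-(γ ω' / θ ω') * (a ω' + θ ω' * (X ω' - a ω'))) with hZ
  set W : Ω → ℝ := fun ω => c ω - d ω * X ω with hW
  have haM' : Measurable a := haM.mono hle le_rfl
  have hγM' : Measurable γ := hγM.mono hle le_rfl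
  have hθM' : Measurable θ := hθM.mono hle le_rfl
  have hcM' : Measurable c := hcM.mono hle le_rfl
  have hdM' : Measurable d := hdM.mono hle le_rfl
  have hZM : Measurable Z :=
    (((hγM'.div hθM').neg).mul (haM'.add (hθM'.mul (hX_meas.sub haM')))).exp
  have hWM : Measurable W := hcM'.sub (hdM'.mul hX_meas)
  have hbdd : ∀ f : Ω → ℝ, Measurable f → (∀ᵐ ω ∂μ, |f ω| ≤ 1) → Integrable f μ := by
    intro f hf hb
    refine Integrable.mono' (integrable_const 1) hf.aestronglyMeasurable ?_
    filter_upwards [hb] with ω h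
    simpa [Real.norm_eq_abs] using h
  have hZb : ∀ᵐ ω ∂μ, |Z ω| ≤ 1 := by
    filter_upwards [ha_mem, hγ_mem, hθ_mem, hX_mem] with ω hA hG hT hXm
    simp only [hZ]
    rw [abs_of_pos (Real.exp_pos _), Real.exp_le_one_iff]
    have h1 : 0 ≤ γ ω / θ ω := div_nonneg hG.1 hT.1.le
    have h2 : 0 ≤ a ω + θ ω * (X ω - a ω) := by nlinarith [hA.1, hA.2, hXm.1, hT.1, hT.2]
    nlinarith
  have hcb : ∀ᵐ ω ∂μ, |c ω| ≤ 1 := by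
    filter_upwards [ha_mem, hγ_mem, hθ_mem] with ω hA hG hT
    simp only [hc]
    rw [abs_of_pos (Real.exp_pos _), Real.exp_le_one_iff]
    have h1 : γ ω ≤ γ ω / θ ω := by
      rw [le_div_iff₀ hT.1]
      nlinarith [hG.1, hT.2]
    nlinarith [hA.1]
  have hub : ∀ᵐ ω ∂μ, u ω ≤ 1 := by
    filter_upwards [hγ_mem] with ω hG
    simp only [hu]
    rw [Real.exp_le_one_iff]
    linarith [hG.1]
  have hdb : ∀ᵐ ω ∂μ, |d ω * X ω| ≤ 1 := by
    filter_upwards [hcb, hub, hX_mem] with ω h1 h2 h3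
    have hu0 : (0:ℝ) < u ω := by simp only [hu]; exact Real.exp_pos _
    have hc0 : (0:ℝ) < c ω := by simp only [hc]; exact Real.exp_pos _
    have hc1 : c ω ≤ 1 := by rwa [abs_of_pos hc0] at h1
    have ht0 : 0 ≤ (1 - u ω) * X ω := mul_nonneg (by linarith) h3.1
    have ht1 : (1 - u ω) * X ω ≤ 1 := by nlinarith [h3.1, h3.2]
    rw [abs_le]
    constructor
    · simp only [hd]
      nlinarith [mul_nonneg hc0.le ht0]
    · simp only [hd]
      nlinarith [mul_le_mul hc1 ht1 ht0 zero_le_one]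
  have hWb : ∀ᵐ ω ∂μ, |W ω| ≤ 1 := by
    filter_upwards [hcb, hdb, hub, hX_mem] with ω h1 h2 h3 h4
    have hu0 : (0:ℝ) < u ω := by simp only [hu]; exact Real.exp_pos _
    have hc0 : (0:ℝ) < c ω := by simp only [hc]; exact Real.exp_pos _
    have hc1 : c ω ≤ 1 := by rwa [abs_of_pos hc0] at h1
    have hdX0 : 0 ≤ d ω * X ω := by
      simp only [hd]
      exact mul_nonneg (mul_nonneg hc0.le (by linarith)) h4.1
    have hdX1 : d ω * X ω ≤ 1 := by rwa [abs_of_nonneg hdX0] at h2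
    simp only [hW]
    rw [abs_le]
    exact ⟨by linarith, by linarith⟩
  have hZint : Integrable Z μ := hbdd Z hZM hZb
  have hdXint : Integrable (fun ω => d ω * X ω) μ := hbdd _ (hdM'.mul hX_meas) hdb
  have hcint : Integrable c μ := hbdd c hcM' hcb
  have hWint : Integrable W μ := hbdd W hWM hWb
  have hZW : Z ≤ᵐ[μ] W := by
    filter_upwards [ha_mem, hγ_mem, hθ_mem, hX_mem] with ω hA hG hT hXm
    have hθ0 : θ ω ≠ 0 := ne_of_gt hT.1
    have hexp : -(γ ω / θ ω) * (a ω + θ ω * (X ω - a ω))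
        = (-(γ ω / θ ω) * a ω + γ ω * a ω) + -(γ ω * X ω) := by
      field_simp
      ring
    simp only [hZ, hW, hd, hu, hc]
    rw [hexp, Real.exp_add]
    have hch := chord_exp (c := γ ω) hXm.1 hXm.2
    nlinarith [Real.exp_pos (-(γ ω / θ ω) * a ω + γ ω * a ω),
      mul_le_mul_of_nonneg_left hch (Real.exp_pos (-(γ ω / θ ω) * a ω + γ ω * a ω)).le]
  have hdX_eq : μ[(fun ω => d ω * X ω)|𝓕 t] =ᵐ[μ] fun ω => d ω * (μ[X|𝓕 t]) ω := by
    have h := condExp_mul_of_stronglyMeasurable_left hdM.stronglyMeasurable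
      (by exact hdXint) hX_int
    filter_upwards [h] with ω hω using hω
  have hc_eq : μ[c|𝓕 t] = c := condExp_of_stronglyMeasurable hle hcM.stronglyMeasurable hcint
  have hW_eq : μ[W|𝓕 t] =ᵐ[μ] fun ω => c ω - d ω * (μ[X|𝓕 t]) ω := by
    have hsub : μ[W|𝓕 t] =ᵐ[μ] μ[c|𝓕 t] - μ[(fun ω => d ω * X ω)|𝓕 t] :=
      condExp_sub hcint hdXint _
    filter_upwards [hsub, hdX_eq] with ω h1 h2
    rw [h1]
    simp only [Pi.sub_apply, hc_eq, h2]
  have hcmp : μ[Z|𝓕 t] ≤ᵐ[μ] μ[W|𝓕 t] := condExp_mono hZint hWint hZW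
  filter_upwards [hcmp, hW_eq, hhaz, ha_mem, hγ_mem, hθ_mem] with ω h1 h2 hdr hA hG hT
  have hγδ : γ ω ≤ δ ω := le_trans hG.2 (min_le_right _ _)
  have hx : a ω + γ ω * (a ω * (1 - a ω)) ≤ (μ[X|𝓕 t]) ω := by
    have h3 : γ ω * (a ω * (1 - a ω)) ≤ δ ω * (a ω * (1 - a ω)) :=
      mul_le_mul_of_nonneg_right hγδ (mul_nonneg hA.1 (by linarith [hA.2]))
    linarith
  have hu1 : u ω ≤ 1 := by
    simp only [hu]
    rw [Real.exp_le_one_iff]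
    linarith [hG.1]
  have hc0 : (0:ℝ) < c ω := by simp only [hc]; exact Real.exp_pos _
  have hd0 : 0 ≤ d ω := by
    simp only [hd]; exact mul_nonneg hc0.le (by linarith)
  have hkey := key_ineq hA.1 hA.2 hG.1
  calc (μ[Z|𝓕 t]) ω ≤ (μ[W|𝓕 t]) ω := h1
    _ = c ω - d ω * (μ[X|𝓕 t]) ω := h2
    _ ≤ c ω - d ω * (a ω + γ ω * (a ω * (1 - a ω))) := by
        nlinarith [mul_le_mul_of_nonneg_left hx hd0]
    _ ≤ c ω * Real.exp (-(γ ω * a ω)) := by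
        have hexpand : c ω - d ω * (a ω + γ ω * (a ω * (1 - a ω)))
            = c ω * (1 - (1 - u ω) * (a ω + γ ω * (a ω * (1 - a ω)))) := by
          simp only [hd]; ring
        rw [hexpand]
        have : 1 - (1 - u ω) * (a ω + γ ω * (a ω * (1 - a ω)))
            ≤ Real.exp (-(γ ω * a ω)) := by
          simp only [hu]
          exact hkey
        exact mul_le_mul_of_nonneg_left this hc0.le
    _ = Real.exp (-(γ ω / θ ω) * a ω) := by
        simp only [hc]
        rw [← Real.exp_add]
        congr 1
        ring
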